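/- arXiv:2302.06710 — 3 statements merged into one kernel-verified Lean document; each statement's English description precedes it below -/
import Mathlib

section
/- (Bounding lemma.) Let X_{1:n} and X^ε_{1:n} be tuples in X^n differing in at most ⌊εn⌋ coordinates. Let m ∈ ℕ, let G_1,…,G_m be families of functions X → ℝ, and let t_1,…,t_m ∈ ℕ and M_1,…,M_m ≥ 0 be such that for each j ∈ [m], sup_{g∈G_j} Σ_{i=1}^n 1{|g(X_i)| > M_j} ≤ t_j. If φ satisfies (⌊εn⌋ + Σ_{j=1}^m t_j)/n ≤ φ < 1/2, then for any linear combination g = Σ_{j=1}^m a_j g_j with a_j ∈ ℝ and g_j ∈ G_j: |T̂_{n,φn}(g, X^ε_{1:n}) − Σ_{j=1}^m a_j·(1/n)Σ_{i=1}^n τ_{M_j}(g_j(X_i))| ≤ 6φ·Σ_{j=1}^m |a_j|·M_j. -/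
open MeasureTheory ProbabilityTheory Real Filter
open scoped BigOperators ENNReal NNReal Classical

noncomputable section

namespace Paper

variable {𝕏 : Type*} [MeasurableSpace 𝕏]

/-- The `k`-trimmed mean of `f` over the sample `x`. -/
def trimmedMean {n : ℕ} (k : ℕ) (f : 𝕏 → ℝ) (x : Fin n → 𝕏) : ℝ :=
  (∑ i ∈ Finset.univ.filter (fun i : Fin n => k ≤ (i : ℕ) ∧ (i : ℕ) < n - k),
    f (x (Tuple.sort (fun j => f (x j)) i))) / ((n - 2 * k : ℕ) : ℝ)

/-- Law of an i.i.d. sample of size `n` from `P`. -/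
def iidMeasure (n : ℕ) (P : Measure 𝕏) : Measure (Fin n → 𝕏) := Measure.pi fun _ => P

/-- Expected supremum of the empirical process. -/
def Emp (n : ℕ) (F : Set (𝕏 → ℝ)) (P : Measure 𝕏) : ℝ :=
  ∫ x : Fin n → 𝕏,
    sSup ((fun f : 𝕏 → ℝ => |(∑ i, f (x i)) / n - ∫ z, f z ∂P|) '' F) ∂(iidMeasure n P)

/-- Law of `n` i.i.d. uniform signs (encoded by booleans). -/
def signMeasure (n : ℕ) : Measure (Fin n → Bool) :=
  Measure.pi fun _ => (PMF.uniformOfFintype Bool).toMeasure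

/-- Rademacher complexity. -/
def Rad (n : ℕ) (F : Set (𝕏 → ℝ)) (P : Measure 𝕏) : ℝ :=
  ∫ sx : (Fin n → Bool) × (Fin n → 𝕏),
    sSup ((fun f : 𝕏 → ℝ =>
      |(∑ i, (if sx.1 i then (1 : ℝ) else -1) * f (sx.2 i)) / n|) '' F)
    ∂((signMeasure n).prod (iidMeasure n P))

/-- Worst-case centered `p`-th moment: `ν_p(F,P)`. -/
def nu (p : ℝ) (F : Set (𝕏 → ℝ)) (P : Measure 𝕏) : ℝ :=
  sSup ((fun f : 𝕏 → ℝ => (∫ z, |f z - ∫ w, f w ∂P| ^ p ∂P) ^ (1 / p)) '' F)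

/-- Truncation `τ_M`. -/
def trunc (M x : ℝ) : ℝ := max (-M) (min M x)

/-- Centered class `F^o`. -/
def centered (F : Set (𝕏 → ℝ)) (P : Measure 𝕏) : Set (𝕏 → ℝ) :=
  (fun f : 𝕏 → ℝ => fun z => f z - ∫ w, f w ∂P) '' F

/-- Truncated class `τ_M ∘ G`. -/
def truncClass (M : ℝ) (G : Set (𝕏 → ℝ)) : Set (𝕏 → ℝ) :=
  (fun g : 𝕏 → ℝ => fun z => trunc M (g z)) '' G

/-- Truncation remainder `rem_M(G,P)`. -/
def rem (M : ℝ) (G : Set (𝕏 → ℝ)) (P : Measure 𝕏) : ℝ :=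
  sSup ((fun g : 𝕏 → ℝ => |∫ z, trunc M (g z) ∂P|) '' G)

/-- `p`-compatibility of a measure with a family of functions. -/
def Compatible (p : ℝ) (F : Set (𝕏 → ℝ)) (P : Measure 𝕏) : Prop :=
  (∀ f ∈ F, Measurable f) ∧
  (∀ f ∈ F, MemLp f (ENNReal.ofReal p) P) ∧
  ∃ D ⊆ F, D.Countable ∧ ∀ f ∈ F, ∃ u : ℕ → 𝕏 → ℝ, (∀ m, u m ∈ D) ∧
    (∀ z, Tendsto (fun m => u m z) atTop (nhds (f z))) ∧
    Tendsto (fun m => ∫ z, |u m z - f z| ^ p ∂P) atTop (nhds 0)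

/-- `X` is an i.i.d. sample from `P`. -/
def IsIIDSample {Ω : Type*} [MeasurableSpace Ω] (μpr : Measure Ω) {n : ℕ}
    (X : Fin n → Ω → 𝕏) (P : Measure 𝕏) : Prop :=
  (∀ i, Measurable (X i)) ∧
  iIndepFun X μpr ∧
  ∀ i, Measure.map (X i) μpr = P

/-- `Xε` is an `ε`-contaminated i.i.d. sample from `P`. -/
def IsContaminated {Ω : Type*} [MeasurableSpace Ω] (μpr : Measure Ω) {n : ℕ}
    (Xε : Fin n → Ω → 𝕏) (P : Measure 𝕏) (ε : ℝ) : Prop :=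
  ∃ X : Fin n → Ω → 𝕏, IsIIDSample μpr X P ∧
    ∀ ω, ((Finset.univ.filter fun i : Fin n => Xε i ω ≠ X i ω).card : ℝ) ≤ ε * n


lemma card_filter_val {n : ℕ} (p : Fin n → Prop) [DecidablePred p]
    (q : ℕ → Prop) [DecidablePred q] (h : ∀ i : Fin n, p i ↔ q i.val) :
    (Finset.univ.filter p).card = ((Finset.range n).filter q).card := by
  apply Finset.card_bij (fun i _ => i.val)
  · intro i hi
    simp only [Finset.mem_filter, Finset.mem_range]
    exact ⟨i.isLt, (h i).mp (Finset.mem_filter.mp hi).2⟩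
  · intro i _ j _ hh; exact Fin.val_injective hh
  · intro b hb
    simp only [Finset.mem_filter, Finset.mem_range] at hb
    exact ⟨⟨b, hb.1⟩, Finset.mem_filter.mpr ⟨Finset.mem_univ _, (h _).mpr hb.2⟩, rfl⟩

lemma abs_trunc_le {M : ℝ} (hM : 0 ≤ M) (x : ℝ) : |trunc M x| ≤ M := by
  rw [abs_le, trunc]
  constructor
  · exact le_max_left _ _
  · exact max_le (by linarith) (min_le_left _ _)

lemma trunc_eq_self {M x : ℝ} (h : |x| ≤ M) : trunc M x = x := by
  rw [abs_le] at h
  rw [trunc, min_eq_right h.2, max_eq_right h.1]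

/-- Bounding lemma (deterministic). -/
theorem bounding_lemma
    {𝕏 : Type*} (n m : ℕ) (hn : 0 < n) (hm : 0 < m) (ε : ℝ) (hε0 : 0 ≤ ε)
    (X Xε : Fin n → 𝕏)
    (hdiff : (Finset.univ.filter fun i : Fin n => Xε i ≠ X i).card ≤ ⌊ε * n⌋₊)
    (G : Fin m → Set (𝕏 → ℝ)) (t : Fin m → ℕ) (M : Fin m → ℝ) (hM : ∀ j, 0 ≤ M j)
    (hcount : ∀ j, ∀ g ∈ G j,
      (Finset.univ.filter fun i : Fin n => M j < |g (X i)|).card ≤ t j)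
    (φ : ℝ) (k : ℕ) (hk : (k : ℝ) = φ * n)
    (hφ1 : ((⌊ε * n⌋₊ + ∑ j, t j : ℕ) : ℝ) / n ≤ φ) (hφ2 : φ < 1 / 2)
    (a : Fin m → ℝ) (gs : Fin m → 𝕏 → ℝ) (hgs : ∀ j, gs j ∈ G j) :
    |trimmedMean k (fun z => ∑ j, a j * gs j z) Xε
        - ∑ j, a j * ((∑ i, trunc (M j) (gs j (X i))) / n)| ≤
      6 * φ * ∑ j, |a j| * M j := by
  have hn' : (0 : ℝ) < n := by exact_mod_cast hn
  -- basic facts about k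
  have h2k : 2 * k < n := by
    have : ((2 * k : ℕ) : ℝ) < (n : ℝ) := by push_cast; nlinarith [hk, hn', hφ2]
    exact_mod_cast this
  -- |S| ≤ k for the bad set
  set S : Finset (Fin n) :=
    (Finset.univ.filter fun i : Fin n => Xε i ≠ X i) ∪
      Finset.univ.biUnion (fun j : Fin m =>
        Finset.univ.filter fun i : Fin n => M j < |gs j (X i)|) with hS
  have hScard : S.card ≤ k := by
    have h1 : S.card ≤ ⌊ε * n⌋₊ + ∑ j, t j := by
      calc S.card ≤ _ + _ := Finset.card_union_le _ _
        _ ≤ ⌊ε * n⌋₊ + ∑ j, t j := by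
            refine add_le_add hdiff ?_
            refine (Finset.card_biUnion_le).trans ?_
            exact Finset.sum_le_sum fun j _ => hcount j (gs j) (hgs j)
    have h2 : ((⌊ε * n⌋₊ + ∑ j, t j : ℕ) : ℝ) ≤ k := by
      rw [hk]
      calc ((⌊ε * n⌋₊ + ∑ j, t j : ℕ) : ℝ) = (((⌊ε * n⌋₊ + ∑ j, t j : ℕ)) : ℝ) / n * n := by
            field_simp
        _ ≤ φ * n := by
            apply mul_le_mul_of_nonneg_right hφ1 (le_of_lt hn')
    exact h1.trans (by exact_mod_cast h2)
  -- notation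
  set F : 𝕏 → ℝ := fun z => ∑ j, a j * gs j z with hF
  set σ : Equiv.Perm (Fin n) := Tuple.sort (fun j => F (Xε j)) with hσ
  set v : Fin n → ℝ := fun i => F (Xε (σ i)) with hv
  set H : 𝕏 → ℝ := fun z => ∑ j, a j * trunc (M j) (gs j z) with hH
  set A : ℝ := ∑ j, |a j| * M j with hA
  have hA0 : 0 ≤ A := Finset.sum_nonneg fun j _ => mul_nonneg (abs_nonneg _) (hM j)
  have hHbound : ∀ z, |H z| ≤ A := by
    intro z
    calc |H z| ≤ ∑ j, |a j * trunc (M j) (gs j z)| := Finset.abs_sum_le_sum_abs _ _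
      _ ≤ A := by
          refine Finset.sum_le_sum fun j _ => ?_
          rw [abs_mul]
          exact mul_le_mul_of_nonneg_left (abs_trunc_le (hM j) _) (abs_nonneg _)
  -- good indices
  have hgood : ∀ i, i ∉ S → F (Xε i) = H (X i) := by
    intro i hi
    simp only [hS, Finset.mem_union, Finset.mem_biUnion, Finset.mem_filter,
      Finset.mem_univ, true_and, not_or, not_exists, not_lt, ne_eq, not_not] at hi
    rw [hF, hH, hi.1]
    exact Finset.sum_congr rfl fun j _ => by rw [trunc_eq_self (hi.2 j)]
  have mono : Monotone v := Tuple.monotone_sort (fun j => F (Xε j))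
  -- bad positions
  set B : Finset (Fin n) := Finset.univ.filter (fun p => σ p ∈ S) with hB
  have hBcard : B.card ≤ k := by
    refine le_trans (le_of_eq ?_) hScard
    apply Finset.card_bij (fun p _ => σ p)
    · intro p hp; exact (Finset.mem_filter.mp hp).2
    · intro p _ q _ h; exact σ.injective h
    · intro s hs; exact ⟨σ.symm s, by simp [hB, hs], by simp⟩
  -- the middle index set
  set I : Finset (Fin n) :=
    Finset.univ.filter (fun i : Fin n => k ≤ (i : ℕ) ∧ (i : ℕ) < n - k) with hI
  have hIcard : I.card = n - 2 * k := by
    rw [hI, card_filter_val _ (fun x => k ≤ x ∧ x < n - k) (fun i => Iff.rfl)]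
    have : (Finset.range n).filter (fun i => k ≤ i ∧ i < n - k) = Finset.Ico k (n - k) := by
      ext x; simp only [Finset.mem_filter, Finset.mem_range, Finset.mem_Ico]; omega
    rw [this, Nat.card_Ico]; omega
  -- middle values are bounded by A
  have hvle : ∀ i ∈ I, v i ≤ A := by
    intro i hi
    have hi' : (i : ℕ) < n - k := (Finset.mem_filter.mp hi).2.2
    set P : Finset (Fin n) := Finset.univ.filter (fun p : Fin n => (i : ℕ) ≤ (p : ℕ)) with hP
    have hPcard : P.card = n - (i : ℕ) := by
      rw [hP, card_filter_val _ (fun x => (i : ℕ) ≤ x) (fun p => Iff.rfl)]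
      have : (Finset.range n).filter (fun x => (i : ℕ) ≤ x) = Finset.Ico (i : ℕ) n := by
        ext x; simp only [Finset.mem_filter, Finset.mem_range, Finset.mem_Ico]; omega
      rw [this, Nat.card_Ico]
    have : ∃ p ∈ P, p ∉ B := by
      by_contra hc
      push_neg at hc
      have := Finset.card_le_card hc
      omega
    obtain ⟨p, hpP, hpB⟩ := this
    have h1 : v i ≤ v p := mono (by
      rw [Fin.le_def]; exact (Finset.mem_filter.mp hpP).2)
    have h2 : σ p ∉ S := by simpa [hB] using hpB
    calc v i ≤ v p := h1
      _ = H (X (σ p)) := hgood _ h2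
      _ ≤ A := (abs_le.mp (hHbound _)).2
  have hvge : ∀ i ∈ I, -A ≤ v i := by
    intro i hi
    have hi' : k ≤ (i : ℕ) := (Finset.mem_filter.mp hi).2.1
    set P : Finset (Fin n) := Finset.univ.filter (fun p : Fin n => (p : ℕ) ≤ (i : ℕ)) with hP
    have hPcard : P.card = (i : ℕ) + 1 := by
      rw [hP, card_filter_val _ (fun x => x ≤ (i : ℕ)) (fun p => Iff.rfl)]
      have : (Finset.range n).filter (fun x => x ≤ (i : ℕ)) = Finset.Ico 0 ((i : ℕ) + 1) := by
        ext x; simp only [Finset.mem_filter, Finset.mem_range, Finset.mem_Ico]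
        have := i.isLt; omega
      rw [this, Nat.card_Ico]; omega
    have : ∃ p ∈ P, p ∉ B := by
      by_contra hc
      push_neg at hc
      have := Finset.card_le_card hc
      omega
    obtain ⟨p, hpP, hpB⟩ := this
    have h1 : v p ≤ v i := mono (by
      rw [Fin.le_def]; exact (Finset.mem_filter.mp hpP).2)
    have h2 : σ p ∉ S := by simpa [hB] using hpB
    calc -A ≤ H (X (σ p)) := (abs_le.mp (hHbound _)).1
      _ = v p := (hgood _ h2).symm
      _ ≤ v i := h1
  have hvabs : ∀ i ∈ I, |v i| ≤ A := fun i hi => abs_le.mpr ⟨hvge i hi, hvle i hi⟩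
  -- sums
  set SV : ℝ := ∑ i ∈ I, v i with hSV
  set SH : ℝ := ∑ i, H (X i) with hSH
  have hSVabs : |SV| ≤ (↑(n - 2 * k) : ℝ) * A := by
    calc |SV| ≤ ∑ i ∈ I, |v i| := Finset.abs_sum_le_sum_abs _ _
      _ ≤ I.card • A := Finset.sum_le_card_nsmul _ _ _ (fun i hi => hvabs i hi)
      _ = (↑(n - 2 * k) : ℝ) * A := by rw [hIcard, nsmul_eq_mul]
  -- key estimate: |SV - SH| ≤ 4 k A
  have hkey : |SV - SH| ≤ 4 * k * A := by
    have hre : SH = ∑ i ∈ I, H (X (σ i)) + ∑ i ∈ Iᶜ, H (X (σ i)) := by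
      rw [hSH, ← Equiv.sum_comp σ (fun i => H (X i))]
      rw [← Finset.sum_add_sum_compl I]
    have hsplit : SV - SH = (∑ i ∈ I, (v i - H (X (σ i)))) - ∑ i ∈ Iᶜ, H (X (σ i)) := by
      rw [hre, Finset.sum_sub_distrib]; ring
    have hIc : (Iᶜ : Finset (Fin n)).card = 2 * k := by
      have := Finset.card_compl I
      rw [hIcard] at this
      simp only [Fintype.card_fin] at this
      omega
    have e1 : |∑ i ∈ I, (v i - H (X (σ i)))| ≤ 2 * k * A := by
      have hzero : ∀ i ∈ I, i ∉ I.filter (fun i => σ i ∈ S) → v i - H (X (σ i)) = 0 := by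
        intro i hi hni
        have : σ i ∉ S := by
          intro hmem
          exact hni (Finset.mem_filter.mpr ⟨hi, hmem⟩)
        exact sub_eq_zero.mpr (hgood _ this)
      calc |∑ i ∈ I, (v i - H (X (σ i)))|
          = |∑ i ∈ I.filter (fun i => σ i ∈ S), (v i - H (X (σ i)))| := by
            congr 1
            refine (Finset.sum_filter_of_ne fun i hi hne => ?_).symm
            by_contra hc
            exact hne (sub_eq_zero.mpr (hgood _ hc))
        _ ≤ ∑ i ∈ I.filter (fun i => σ i ∈ S), |v i - H (X (σ i))| :=
            Finset.abs_sum_le_sum_abs _ _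
        _ ≤ (I.filter (fun i => σ i ∈ S)).card • (2 * A) := by
            refine Finset.sum_le_card_nsmul _ _ _ (fun i hi => ?_)
            have hi' := (Finset.mem_filter.mp hi).1
            calc |v i - H (X (σ i))| ≤ |v i| + |H (X (σ i))| := abs_sub _ _
              _ ≤ A + A := add_le_add (hvabs i hi') (hHbound _)
              _ = 2 * A := by ring
        _ ≤ k • (2 * A) := by
            refine nsmul_le_nsmul_left (by linarith) ?_
            refine le_trans (Finset.card_le_card ?_) hBcard
            intro i hi
            simp only [hB, Finset.mem_filter, Finset.mem_univ, true_and]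
            exact (Finset.mem_filter.mp hi).2
        _ = 2 * k * A := by rw [nsmul_eq_mul]; ring
    have e2 : |∑ i ∈ Iᶜ, H (X (σ i))| ≤ 2 * k * A := by
      calc |∑ i ∈ Iᶜ, H (X (σ i))| ≤ ∑ i ∈ Iᶜ, |H (X (σ i))| := Finset.abs_sum_le_sum_abs _ _
        _ ≤ (Iᶜ : Finset (Fin n)).card • A := Finset.sum_le_card_nsmul _ _ _ (fun i _ => hHbound _)
        _ = 2 * k * A := by rw [hIc, nsmul_eq_mul]; push_cast; ring
    calc |SV - SH| ≤ |∑ i ∈ I, (v i - H (X (σ i)))| + |∑ i ∈ Iᶜ, H (X (σ i))| := by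
          rw [hsplit]; exact abs_sub _ _
      _ ≤ 2 * k * A + 2 * k * A := add_le_add e1 e2
      _ = 4 * k * A := by ring
  -- rewrite the goal
  have hgoal1 : trimmedMean k F Xε = SV / ((n - 2 * k : ℕ) : ℝ) := rfl
  have hgoal2 : (∑ j, a j * ((∑ i, trunc (M j) (gs j (X i))) / n)) = SH / n := by
    calc (∑ j, a j * ((∑ i, trunc (M j) (gs j (X i))) / (n : ℝ)))
        = ∑ j, (∑ i, a j * trunc (M j) (gs j (X i))) / (n : ℝ) :=
          Finset.sum_congr rfl fun j _ => by rw [← mul_div_assoc, Finset.mul_sum]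
      _ = (∑ j, ∑ i, a j * trunc (M j) (gs j (X i))) / (n : ℝ) := by rw [Finset.sum_div]
      _ = (∑ i, ∑ j, a j * trunc (M j) (gs j (X i))) / (n : ℝ) := by rw [Finset.sum_comm]
      _ = SH / n := rfl
  rw [hgoal1, hgoal2]
  -- final arithmetic
  set D : ℝ := ((n - 2 * k : ℕ) : ℝ) with hD
  have hDval : D = (n : ℝ) - 2 * k := by
    rw [hD, Nat.cast_sub (le_of_lt h2k)]; push_cast; ring
  have hD0 : 0 < D := by
    rw [hDval, hk]; nlinarith
  have hkn : (k : ℝ) ≤ φ * n := le_of_eq hk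
  have hdecomp : SV / D - SH / n = (SV - SH) / n + SV * (((n : ℝ) - D) / (D * n)) := by
    field_simp
    ring
  have hstep : |SV / D - SH / n| ≤ 4 * k * A / n + (D * A) * (((n : ℝ) - D) / (D * n)) := by
    rw [hdecomp]
    refine le_trans (abs_add_le _ _) (add_le_add ?_ ?_)
    · rw [abs_div, abs_of_pos hn']
      gcongr
    · rw [abs_mul]
      have hfrac : 0 ≤ ((n : ℝ) - D) / (D * n) := by
        apply div_nonneg
        · rw [hDval]
          have : (0:ℝ) ≤ (k:ℝ) := Nat.cast_nonneg k
          linarith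
        · positivity
      rw [abs_of_nonneg hfrac]
      exact mul_le_mul_of_nonneg_right hSVabs hfrac
  have hDne : (n:ℝ) - 2*(k:ℝ) ≠ 0 := by rw [← hDval]; exact hD0.ne'
  have hval : 4 * (k : ℝ) * A / n + (D * A) * (((n : ℝ) - D) / (D * n)) = 6 * ((k : ℝ) / n) * A := by
    rw [show (D * A) * (((n : ℝ) - D) / (D * n)) = A * ((D * ((n : ℝ) - D)) / (D * n)) by ring,
      mul_div_mul_left _ _ hD0.ne', hDval]
    ring
  calc |SV / D - SH / n| ≤ _ := hstep
    _ = 6 * ((k : ℝ) / n) * A := hval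
    _ = 6 * φ * A := by rw [hk]; field_simp

end Paper
end
end

section
/- (Fixed point argument.) In the regression setting, let Z^ε_{1:n} be a fixed tuple in (X×ℝ)^n, let 1 ≤ φn < n/2, write T̂^ε(h) := T̂_{n,φn}(h, Z^ε_{1:n}), and let f̂ ∈ argmin_{f∈F} sup_{g∈F} T̂^ε(ℓ_f − ℓ_g). Write r_f := ‖f − f*_P‖_{L²(P_X)}. If r > 0 and γ > 0 are such that inf{T̂^ε(ℓ_f − ℓ_{f*_P}) : f∈F, r_f = r} ≥ γ ≥ 2·sup{T̂^ε(m_{f,P} − P m_{f,P}) : f∈F, r_f ≤ r}, then ‖f̂ − f*_P‖_{L²(P_X)} ≤ r and R_P(f̂) − R_P(f*_P) ≤ r² + 2γ. -/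
open MeasureTheory ProbabilityTheory Real Filter
open scoped BigOperators ENNReal NNReal Classical

noncomputable section

namespace Paper

variable {𝕏 : Type*} [MeasurableSpace 𝕏]

variable {𝕏 : Type*} [MeasurableSpace 𝕏]

/-- The marginal of `P` on the covariate space. -/
def marginalX (P : Measure (𝕏 × ℝ)) : Measure 𝕏 := P.map Prod.fst

/-- Quadratic loss `ℓ_f`. -/
def loss (f : 𝕏 → ℝ) : 𝕏 × ℝ → ℝ := fun z => (f z.1 - z.2) ^ 2

/-- Quadratic risk `R_P(f)`. -/
def risk (P : Measure (𝕏 × ℝ)) (f : 𝕏 → ℝ) : ℝ := ∫ z, loss f z ∂P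

/-- `‖f - f*‖_{L²(P_X)}`. -/
def dist2 (P : Measure (𝕏 × ℝ)) (fstar f : 𝕏 → ℝ) : ℝ :=
  Real.sqrt (∫ x, (f x - fstar x) ^ 2 ∂(marginalX P))

/-- `‖f - f*‖_{L¹(P_X)}`. -/
def dist1 (P : Measure (𝕏 × ℝ)) (fstar f : 𝕏 → ℝ) : ℝ :=
  ∫ x, |f x - fstar x| ∂(marginalX P)

/-- Multiplier term `m_{f,P}(x,y) = (y - f*(x)) (f(x) - f*(x))`. -/
def mult (fstar f : 𝕏 → ℝ) : 𝕏 × ℝ → ℝ := fun z => (z.2 - fstar z.1) * (f z.1 - fstar z.1)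

/-- Small-ball parameter `θ₀(F,P)`. -/
def theta0 (F : Set (𝕏 → ℝ)) (P : Measure (𝕏 × ℝ)) (fstar : 𝕏 → ℝ) : ℝ :=
  sSup ((fun f => dist2 P fstar f / dist1 P fstar f) '' {f ∈ F | 0 < dist1 P fstar f})

/-- Multiplier moment parameter `κ_p(F,P)`. -/
def kappa (p : ℝ) (F : Set (𝕏 → ℝ)) (P : Measure (𝕏 × ℝ)) (fstar : 𝕏 → ℝ) : ℝ :=
  sSup ((fun f =>
      (∫ z, |mult fstar f z - ∫ w, mult fstar f w ∂P| ^ p ∂P) ^ (1 / p)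
        / dist2 P fstar f) '' {f ∈ F | 0 < dist2 P fstar f})

/-- Localized quadratic class `F_q(r,P)` (lifted to functions of `(x,y)`). -/
def Fq (F : Set (𝕏 → ℝ)) (P : Measure (𝕏 × ℝ)) (fstar : 𝕏 → ℝ) (r : ℝ) :
    Set (𝕏 × ℝ → ℝ) :=
  (fun f : 𝕏 → ℝ => fun z : 𝕏 × ℝ => f z.1 - fstar z.1) '' {f ∈ F | dist2 P fstar f = r}

/-- Localized multiplier class `F_m(r,P)`. -/
def Fm (F : Set (𝕏 → ℝ)) (P : Measure (𝕏 × ℝ)) (fstar : 𝕏 → ℝ) (r : ℝ) :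
    Set (𝕏 × ℝ → ℝ) :=
  (fun f : 𝕏 → ℝ => fun z : 𝕏 × ℝ => mult fstar f z - ∫ w, mult fstar f w ∂P) ''
    {f ∈ F | dist2 P fstar f ≤ r}

/-- Critical radius `r_q(δ,F,P)`, valued in `ℝ≥0∞` (so that `inf ∅ = ∞`). -/
def rq (n : ℕ) (δ : ℝ) (F : Set (𝕏 → ℝ)) (P : Measure (𝕏 × ℝ)) (fstar : 𝕏 → ℝ) : ℝ≥0∞ :=
  sInf (ENNReal.ofReal ''
    {r : ℝ | 0 < r ∧ (Fq F P fstar r).Nonempty ∧ Rad n (Fq F P fstar r) P ≤ δ * r})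

/-- Critical radius `r_m(δ,F,P)`, valued in `ℝ≥0∞` (so that `inf ∅ = ∞`). -/
def rm (n : ℕ) (δ : ℝ) (F : Set (𝕏 → ℝ)) (P : Measure (𝕏 × ℝ)) (fstar : 𝕏 → ℝ) : ℝ≥0∞ :=
  sInf (ENNReal.ofReal ''
    {r : ℝ | 0 < r ∧ Rad n (Fm F P fstar r) P ≤ δ * r ^ 2})

section TrimAux
variable {n k : ℕ}

def ordStat (a : Fin n → ℝ) : Fin n → ℝ := a ∘ Tuple.sort a

lemma ordStat_mono (a : Fin n → ℝ) : Monotone (ordStat a) := Tuple.monotone_sort a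

lemma ordStat_le_ordStat {a b : Fin n → ℝ} (h : ∀ i, a i ≤ b i) (i : Fin n) :
    ordStat a i ≤ ordStat b i := by
  classical
  set σ := Tuple.sort a with hσ
  set τ := Tuple.sort b with hτ
  set S : Finset (Fin n) := (Finset.Ici i).image σ with hSdef
  set T : Finset (Fin n) := (Finset.Iic i).image τ with hTdef
  have hS : S.card = n - (i : ℕ) := by
    rw [hSdef, Finset.card_image_of_injective _ σ.injective, Fin.card_Ici]
  have hT : T.card = (i : ℕ) + 1 := by
    rw [hTdef, Finset.card_image_of_injective _ τ.injective, Fin.card_Iic]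
  have hcard : n < S.card + T.card := by
    rw [hS, hT]; have := i.isLt; omega
  have hnonempty : (S ∩ T).Nonempty := by
    rw [← Finset.card_pos]
    have h1 := Finset.card_union_add_card_inter S T
    have h2 : (S ∪ T).card ≤ n := by
      simpa using Finset.card_le_card (Finset.subset_univ (S ∪ T))
    omega
  obtain ⟨j, hj⟩ := hnonempty
  rw [Finset.mem_inter] at hj
  obtain ⟨l, hl, hlj⟩ := Finset.mem_image.mp hj.1
  obtain ⟨m, hm, hmj⟩ := Finset.mem_image.mp hj.2
  have h1 : ordStat a i ≤ a j := by
    rw [← hlj]; exact ordStat_mono a (Finset.mem_Ici.mp hl)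
  have h2 : b j ≤ ordStat b i := by
    rw [← hmj]; exact ordStat_mono b (Finset.mem_Iic.mp hm)
  exact h1.trans ((h j).trans h2)

lemma ordStat_eq_of_monotone {a : Fin n → ℝ} {σ : Equiv.Perm (Fin n)}
    (h : Monotone (a ∘ σ)) : ordStat a = a ∘ σ :=
  (Tuple.comp_sort_eq_comp_iff_monotone.mpr h).symm

lemma ordStat_smul (c : ℝ) (hc : 0 ≤ c) (a : Fin n → ℝ) :
    ordStat (fun i => c * a i) = fun i => c * ordStat a i := by
  have h : Monotone ((fun i => c * a i) ∘ Tuple.sort a) := by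
    intro x y hxy
    exact mul_le_mul_of_nonneg_left (ordStat_mono a hxy) hc
  rw [ordStat_eq_of_monotone h]; rfl

lemma ordStat_add_const (c : ℝ) (a : Fin n → ℝ) :
    ordStat (fun i => a i + c) = fun i => ordStat a i + c := by
  have h : Monotone ((fun i => a i + c) ∘ Tuple.sort a) := by
    intro x y hxy
    exact add_le_add_left (ordStat_mono a hxy) c
  rw [ordStat_eq_of_monotone h]; rfl

lemma ordStat_neg (a : Fin n → ℝ) :
    ordStat (fun i => -(a i)) = fun i => -(ordStat a i.rev) := by
  have h : Monotone ((fun i => -(a i)) ∘ (Fin.revPerm.trans (Tuple.sort a))) := by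
    intro x y hxy
    simp only [Function.comp, Equiv.trans_apply, Fin.revPerm_apply]
    have : ordStat a y.rev ≤ ordStat a x.rev := ordStat_mono a (Fin.rev_le_rev.mpr hxy)
    exact neg_le_neg this
  rw [ordStat_eq_of_monotone h]; rfl

def midset (n k : ℕ) : Finset (Fin n) :=
  Finset.univ.filter (fun i : Fin n => k ≤ (i : ℕ) ∧ (i : ℕ) < n - k)

lemma card_midset (hk : 2 * k < n) : (midset n k).card = n - 2 * k := by
  classical
  rw [← Finset.card_image_of_injective (midset n k) Fin.val_injective]
  have : (midset n k).image Fin.val = Finset.Ico k (n - k) := by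
    ext m
    simp only [midset, Finset.mem_image, Finset.mem_filter, Finset.mem_univ, true_and,
      Finset.mem_Ico]
    constructor
    · rintro ⟨i, hi, rfl⟩; exact hi
    · rintro ⟨h1, h2⟩
      exact ⟨⟨m, by omega⟩, ⟨h1, h2⟩, rfl⟩
  rw [this, Nat.card_Ico]; omega

def tmean (k : ℕ) (a : Fin n → ℝ) : ℝ :=
  (∑ i ∈ midset n k, ordStat a i) / ((n - 2 * k : ℕ) : ℝ)

lemma tmean_le_tmean {a b : Fin n → ℝ} (h : ∀ i, a i ≤ b i) :
    tmean k a ≤ tmean k b := by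
  have hs : ∑ i ∈ midset n k, ordStat a i ≤ ∑ i ∈ midset n k, ordStat b i :=
    Finset.sum_le_sum fun i _ => ordStat_le_ordStat h i
  have hd : (0:ℝ) ≤ ((n - 2 * k : ℕ) : ℝ) := Nat.cast_nonneg _
  unfold tmean
  exact div_le_div_of_nonneg_right hs hd

lemma tmean_smul (c : ℝ) (hc : 0 ≤ c) (a : Fin n → ℝ) :
    tmean k (fun i => c * a i) = c * tmean k a := by
  unfold tmean
  rw [ordStat_smul c hc, ← Finset.mul_sum, mul_div_assoc]

lemma tmean_add_const (hk : 2 * k < n) (c : ℝ) (a : Fin n → ℝ) :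
    tmean k (fun i => a i + c) = tmean k a + c := by
  have hne : ((n - 2 * k : ℕ) : ℝ) ≠ 0 := Nat.cast_ne_zero.mpr (by omega)
  unfold tmean
  rw [ordStat_add_const, Finset.sum_add_distrib, Finset.sum_const, card_midset hk, add_div,
    nsmul_eq_mul]
  congr 1
  rw [mul_comm, mul_div_assoc, div_self hne, mul_one]

lemma tmean_neg (a : Fin n → ℝ) : tmean k (fun i => -(a i)) = -(tmean k a) := by
  unfold tmean
  rw [ordStat_neg, ← neg_div]
  congr 1
  have : ∑ i ∈ midset n k, -(ordStat a i.rev) = ∑ i ∈ midset n k, -(ordStat a i) := by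
    apply Finset.sum_equiv Fin.revPerm
    · intro i
      simp only [midset, Finset.mem_filter, Finset.mem_univ, true_and, Fin.revPerm_apply,
        Fin.val_rev]
      have := i.isLt; omega
    · intro i _; simp [Fin.rev_rev]
  rw [this, ← Finset.sum_neg_distrib]

end TrimAux

lemma trimmedMean_eq_tmean {𝕏 : Type*} [MeasurableSpace 𝕏] {n : ℕ} (k : ℕ)
    (f : 𝕏 → ℝ) (x : Fin n → 𝕏) :
    trimmedMean k f x = tmean k (fun i => f (x i)) := rfl

lemma integrable_mul_of_memL2 {α : Type*} [MeasurableSpace α] {μ : MeasureTheory.Measure α}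
    {f g : α → ℝ} (hf : MeasureTheory.MemLp f 2 μ) (hg : MeasureTheory.MemLp g 2 μ) :
    MeasureTheory.Integrable (fun x => f x * g x) μ := by
  have h1 : MeasureTheory.Integrable (fun x => (f x + g x) ^ 2) μ := (hf.add hg).integrable_sq
  have h2 := hf.integrable_sq
  have h3 := hg.integrable_sq
  have h4 := ((h1.sub h2).sub h3).const_mul (2⁻¹ : ℝ)
  refine h4.congr ?_
  filter_upwards with x
  simp only [Pi.sub_apply]
  ring


/-- the fixed point argument (Lemma `lemma:fixedpointargument`). -/
theorem fixed_point_argument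
    {𝕏 : Type*} [MeasurableSpace 𝕏] (F : Set (𝕏 → ℝ)) (P : Measure (𝕏 × ℝ))
    [IsProbabilityMeasure P]
    (hconv : Convex ℝ F) (hcompat : Compatible 2 F (marginalX P))
    (hY : MemLp (fun z : 𝕏 × ℝ => z.2) 2 P)
    (fstar : 𝕏 → ℝ) (hfstarF : fstar ∈ F) (hmin : ∀ f ∈ F, risk P fstar ≤ risk P f)
    (n : ℕ) (Z : Fin n → 𝕏 × ℝ) (k : ℕ) (hk1 : 1 ≤ k) (hk2 : 2 * k < n)
    (fhat : 𝕏 → ℝ) (hfhatF : fhat ∈ F)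
    (hfhat : ∀ f ∈ F,
      sSup ((fun g : 𝕏 → ℝ =>
          trimmedMean k (fun z => loss fhat z - loss g z) Z) '' F) ≤
      sSup ((fun g : 𝕏 → ℝ =>
          trimmedMean k (fun z => loss f z - loss g z) Z) '' F))
    (r γ : ℝ) (hr : 0 < r) (hγ : 0 < γ)
    (hlow : ∀ f ∈ F, dist2 P fstar f = r →
      γ ≤ trimmedMean k (fun z => loss f z - loss fstar z) Z)
    (hhigh : ∀ f ∈ F, dist2 P fstar f ≤ r →
      2 * trimmedMean k (fun z => mult fstar f z - ∫ w, mult fstar f w ∂P) Z ≤ γ) :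
    dist2 P fstar fhat ≤ r ∧ risk P fhat - risk P fstar ≤ r ^ 2 + 2 * γ := by
  classical
  obtain ⟨hmeas, hL2, -⟩ := hcompat
  have h2e : (ENNReal.ofReal 2) = (2 : ℝ≥0∞) := by
    rw [ENNReal.ofReal_ofNat]
  have hmp : MeasurePreserving (Prod.fst : 𝕏 × ℝ → 𝕏) P (marginalX P) :=
    ⟨measurable_fst, rfl⟩
  have hL2' : ∀ f ∈ F, MemLp (fun z : 𝕏 × ℝ => f z.1) 2 P := by
    intro f hf
    have := (hL2 f hf).comp_measurePreserving hmp
    rwa [h2e] at this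
  have hξ : MemLp (fun z : 𝕏 × ℝ => z.2 - fstar z.1) 2 P := hY.sub (hL2' fstar hfstarF)
  have hIntE2 : ∀ f ∈ F, Integrable (fun z : 𝕏 × ℝ => (f z.1 - fstar z.1) ^ 2) P :=
    fun f hf => ((hL2' f hf).sub (hL2' fstar hfstarF)).integrable_sq
  have hIntM : ∀ f ∈ F, Integrable (mult fstar f) P := by
    intro f hf
    have := integrable_mul_of_memL2 hξ ((hL2' f hf).sub (hL2' fstar hfstarF))
    exact this.congr (by filter_upwards with z; simp [mult])
  have hIntLoss : ∀ f ∈ F, Integrable (loss f) P := by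
    intro f hf
    have h := ((hL2' f hf).sub hY).integrable_sq
    exact h.congr (by filter_upwards with z; simp [loss])
  have hriskdiff : ∀ g ∈ F, risk P g - risk P fstar =
      (∫ z, (g z.1 - fstar z.1) ^ 2 ∂P) - 2 * ∫ z, mult fstar g z ∂P := by
    intro g hg
    rw [risk, risk, ← integral_sub (hIntLoss g hg) (hIntLoss fstar hfstarF)]
    have heq : (fun z : 𝕏 × ℝ => loss g z - loss fstar z)
        = fun z => (g z.1 - fstar z.1) ^ 2 - 2 * mult fstar g z := by
      funext z; simp only [loss, mult]; ring
    rw [heq, integral_sub (hIntE2 g hg) ((hIntM g hg).const_mul 2), integral_const_mul]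
  have hdist2_sq : ∀ g ∈ F, (dist2 P fstar g) ^ 2 = ∫ z : 𝕏 × ℝ, (g z.1 - fstar z.1) ^ 2 ∂P := by
    intro g hg
    have hmeasg : Measurable fun x => (g x - fstar x) ^ 2 :=
      ((hmeas g hg).sub (hmeas fstar hfstarF)).pow_const 2
    have hmap : ∫ x, (g x - fstar x) ^ 2 ∂(marginalX P)
        = ∫ z : 𝕏 × ℝ, (g z.1 - fstar z.1) ^ 2 ∂P := by
      rw [marginalX, integral_map measurable_fst.aemeasurable hmeasg.aestronglyMeasurable]
    rw [dist2, Real.sq_sqrt (integral_nonneg fun x => sq_nonneg _), hmap]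
  have hcomb : ∀ g ∈ F, ∀ t : ℝ, 0 ≤ t → t ≤ 1 →
      (fun x => fstar x + t * (g x - fstar x)) ∈ F := by
    intro g hg t ht ht1
    have hmem := hconv hfstarF hg (by linarith : (0:ℝ) ≤ 1 - t) ht (by ring)
    have heq : (fun x => fstar x + t * (g x - fstar x)) = (1 - t) • fstar + t • g := by
      funext x
      simp only [Pi.add_apply, Pi.smul_apply, smul_eq_mul]
      ring
    rw [heq]; exact hmem
  have hdcomb : ∀ g ∈ F, ∀ t : ℝ, 0 ≤ t →
      dist2 P fstar (fun x => fstar x + t * (g x - fstar x)) = t * dist2 P fstar g := by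
    intro g hg t ht
    simp only [dist2]
    have heq : ∫ x, (fstar x + t * (g x - fstar x) - fstar x) ^ 2 ∂(marginalX P)
        = t ^ 2 * ∫ x, (g x - fstar x) ^ 2 ∂(marginalX P) := by
      rw [← integral_const_mul]
      congr 1; funext x; ring
    rw [heq, Real.sqrt_mul (sq_nonneg t), Real.sqrt_sq ht]
  have hBnonpos : ∀ g ∈ F, (∫ z, mult fstar g z ∂P) ≤ 0 := by
    intro g hg
    by_contra hBc
    push_neg at hBc
    set A := ∫ z : 𝕏 × ℝ, (g z.1 - fstar z.1) ^ 2 ∂P with hAdef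
    set B := ∫ z, mult fstar g z ∂P with hBdef
    have hA0 : 0 ≤ A := integral_nonneg fun z => sq_nonneg _
    set t := min 1 (B / (A + 1)) with htdef
    have ht0 : 0 < t := lt_min one_pos (div_pos hBc (by linarith))
    have ht1 : t ≤ 1 := min_le_left _ _
    have htA : t * (A + 1) ≤ B := by
      rw [← le_div_iff₀ (by linarith : (0:ℝ) < A + 1)]
      exact min_le_right _ _
    have hmem := hcomb g hg t ht0.le ht1
    have h0 := hmin _ hmem
    have h1 := hriskdiff _ hmem
    have hI1 : ∫ z : 𝕏 × ℝ, ((fun x => fstar x + t * (g x - fstar x)) z.1 - fstar z.1) ^ 2 ∂P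
        = t ^ 2 * A := by
      rw [hAdef, ← integral_const_mul]
      congr 1; funext z; ring
    have hI2 : ∫ z, mult fstar (fun x => fstar x + t * (g x - fstar x)) z ∂P = t * B := by
      rw [hBdef, ← integral_const_mul]
      congr 1; funext z; simp only [mult]; ring
    rw [hI1, hI2] at h1
    have h0' : 0 ≤ t ^ 2 * A - 2 * (t * B) := by
      have := h0
      linarith [h1, h0]
    nlinarith [mul_le_mul_of_nonneg_left htA ht0.le, mul_pos ht0 hBc, pow_pos ht0 2]
  have htm : ∀ h : 𝕏 × ℝ → ℝ, trimmedMean k h Z = tmean k (fun i => h (Z i)) :=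
    fun h => rfl
  have hconvloss : ∀ g : 𝕏 → ℝ, ∀ t : ℝ, 0 ≤ t → t ≤ 1 → ∀ z : 𝕏 × ℝ,
      loss (fun x => fstar x + t * (g x - fstar x)) z - loss fstar z
        ≤ t * (loss g z - loss fstar z) := by
    intro g t ht ht1 z
    simp only [loss]
    nlinarith [mul_nonneg (mul_nonneg ht (sub_nonneg.mpr ht1)) (sq_nonneg (g z.1 - fstar z.1))]
  have hlossmult : ∀ g : 𝕏 → ℝ, ∀ z : 𝕏 × ℝ,
      loss fstar z - loss g z ≤ 2 * mult fstar g z := by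
    intro g z
    simp only [loss, mult]
    nlinarith [sq_nonneg (g z.1 - fstar z.1)]
  have hstar_le : ∀ g ∈ F, trimmedMean k (fun z => loss fstar z - loss g z) Z ≤ γ := by
    intro g hg
    by_cases hgr : dist2 P fstar g ≤ r
    · set B := ∫ w, mult fstar g w ∂P with hBdef
      have hB := hBnonpos g hg
      rw [← hBdef] at hB
      have hc1 : trimmedMean k (fun z => loss fstar z - loss g z) Z
          ≤ trimmedMean k (fun z => 2 * mult fstar g z) Z := by
        rw [htm, htm]
        exact tmean_le_tmean fun i => hlossmult g (Z i)
      have hc2 : trimmedMean k (fun z => 2 * mult fstar g z) Z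
          = trimmedMean k (fun z => 2 * (mult fstar g z - B) + 2 * B) Z := by
        congr 1; funext z; ring
      have hc3 : trimmedMean k (fun z => 2 * (mult fstar g z - B) + 2 * B) Z
          = trimmedMean k (fun z => 2 * (mult fstar g z - B)) Z + 2 * B := by
        rw [htm, htm]
        exact tmean_add_const hk2 _ _
      have hc4 : trimmedMean k (fun z => 2 * (mult fstar g z - B)) Z
          = 2 * trimmedMean k (fun z => mult fstar g z - B) Z := by
        rw [htm, htm]
        exact tmean_smul 2 (by norm_num) _
      have hc5 := hhigh g hg hgr
      rw [← hBdef] at hc5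
      linarith
    · push_neg at hgr
      have hrg0 : 0 < dist2 P fstar g := lt_trans hr hgr
      set t := r / dist2 P fstar g with htdef
      have ht0 : 0 < t := div_pos hr hrg0
      have ht1 : t ≤ 1 := by
        rw [htdef, div_le_one hrg0]; exact hgr.le
      have hgtF : (fun x => fstar x + t * (g x - fstar x)) ∈ F := hcomb g hg t ht0.le ht1
      have hgtr : dist2 P fstar (fun x => fstar x + t * (g x - fstar x)) = r := by
        rw [hdcomb g hg t ht0.le, htdef]
        field_simp
      have hγle := hlow _ hgtF hgtr
      have h1 : trimmedMean k (fun z => loss fstar z - loss g z) Z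
          ≤ trimmedMean k (fun z =>
              t⁻¹ * (loss fstar z - loss (fun x => fstar x + t * (g x - fstar x)) z)) Z := by
        rw [htm, htm]
        apply tmean_le_tmean
        intro i
        have hcv := hconvloss g t ht0.le ht1 (Z i)
        have h2 : t * (loss fstar (Z i) - loss g (Z i))
            ≤ loss fstar (Z i) - loss (fun x => fstar x + t * (g x - fstar x)) (Z i) := by
          linarith
        calc loss fstar (Z i) - loss g (Z i)
            = t⁻¹ * (t * (loss fstar (Z i) - loss g (Z i))) := by
              field_simp
          _ ≤ t⁻¹ * (loss fstar (Z i) - loss (fun x => fstar x + t * (g x - fstar x)) (Z i)) :=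
              mul_le_mul_of_nonneg_left h2 (inv_nonneg.mpr ht0.le)
      have h3 : trimmedMean k (fun z =>
            t⁻¹ * (loss fstar z - loss (fun x => fstar x + t * (g x - fstar x)) z)) Z
          = t⁻¹ * trimmedMean k (fun z =>
              loss fstar z - loss (fun x => fstar x + t * (g x - fstar x)) z) Z := by
        rw [htm, htm]
        exact tmean_smul _ (inv_nonneg.mpr ht0.le) _
      have h4 : trimmedMean k (fun z =>
            loss fstar z - loss (fun x => fstar x + t * (g x - fstar x)) z) Z
          = - trimmedMean k (fun z =>
              loss (fun x => fstar x + t * (g x - fstar x)) z - loss fstar z) Z := by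
        rw [htm, htm]
        have heq : (fun i => loss fstar (Z i)
              - loss (fun x => fstar x + t * (g x - fstar x)) (Z i))
            = fun i => -((fun j => loss (fun x => fstar x + t * (g x - fstar x)) (Z j)
              - loss fstar (Z j)) i) := by
          funext i; ring
        rw [heq, tmean_neg]
      rw [h3, h4] at h1
      have h5 : t⁻¹ * (-(trimmedMean k (fun z =>
            loss (fun x => fstar x + t * (g x - fstar x)) z - loss fstar z) Z)) ≤ 0 :=
        mul_nonpos_of_nonneg_of_nonpos (inv_nonneg.mpr ht0.le) (by linarith)
      linarith
  have hSstar : sSup ((fun g : 𝕏 → ℝ =>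
      trimmedMean k (fun z => loss fstar z - loss g z) Z) '' F) ≤ γ :=
    Real.sSup_le (by rintro x ⟨g, hg, rfl⟩; exact hstar_le g hg) hγ.le
  have hShat : sSup ((fun g : 𝕏 → ℝ =>
      trimmedMean k (fun z => loss fhat z - loss g z) Z) '' F) ≤ γ :=
    (hfhat fstar hfstarF).trans hSstar
  have hbdd : BddAbove ((fun g : 𝕏 → ℝ =>
      trimmedMean k (fun z => loss fhat z - loss g z) Z) '' F) := by
    refine ⟨trimmedMean k (loss fhat) Z, ?_⟩
    rintro x ⟨g, hg, rfl⟩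
    show trimmedMean k (fun z => loss fhat z - loss g z) Z ≤ trimmedMean k (loss fhat) Z
    rw [htm, htm]
    refine tmean_le_tmean fun i => ?_
    have := sq_nonneg (g (Z i).1 - (Z i).2)
    simp only [loss]
    nlinarith [sq_nonneg (g (Z i).1 - (Z i).2)]
  have hkey : trimmedMean k (fun z => loss fhat z - loss fstar z) Z ≤ γ :=
    (le_csSup hbdd (Set.mem_image_of_mem _ hfstarF)).trans hShat
  have hpart1 : dist2 P fstar fhat ≤ r := by
    by_contra hcon
    push_neg at hcon
    have hrf0 : 0 < dist2 P fstar fhat := lt_trans hr hcon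
    set t := r / dist2 P fstar fhat with htdef
    have ht0 : 0 < t := div_pos hr hrf0
    have ht1 : t < 1 := by
      rw [htdef, div_lt_one hrf0]; exact hcon
    have hftF : (fun x => fstar x + t * (fhat x - fstar x)) ∈ F :=
      hcomb fhat hfhatF t ht0.le ht1.le
    have hftr : dist2 P fstar (fun x => fstar x + t * (fhat x - fstar x)) = r := by
      rw [hdcomb fhat hfhatF t ht0.le, htdef]
      field_simp
    have h5 := hlow _ hftF hftr
    have h6 : trimmedMean k (fun z =>
          loss (fun x => fstar x + t * (fhat x - fstar x)) z - loss fstar z) Z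
        ≤ t * trimmedMean k (fun z => loss fhat z - loss fstar z) Z := by
      have ha : trimmedMean k (fun z =>
            loss (fun x => fstar x + t * (fhat x - fstar x)) z - loss fstar z) Z
          ≤ trimmedMean k (fun z => t * (loss fhat z - loss fstar z)) Z := by
        rw [htm, htm]
        exact tmean_le_tmean fun i => hconvloss fhat t ht0.le ht1.le (Z i)
      have hb : trimmedMean k (fun z => t * (loss fhat z - loss fstar z)) Z
          = t * trimmedMean k (fun z => loss fhat z - loss fstar z) Z := by
        rw [htm, htm]
        exact tmean_smul t ht0.le _
      linarith
    have h7 : t * trimmedMean k (fun z => loss fhat z - loss fstar z) Z ≤ t * γ :=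
      mul_le_mul_of_nonneg_left hkey ht0.le
    nlinarith
  refine ⟨hpart1, ?_⟩
  set B := ∫ w, mult fstar fhat w ∂P with hBdef
  have hhigh' := hhigh fhat hfhatF hpart1
  rw [← hBdef] at hhigh'
  have hTm : trimmedMean k (fun z => mult fstar fhat z - B) Z
      = trimmedMean k (mult fstar fhat) Z - B := by
    rw [htm, htm]
    have := tmean_add_const (n := n) hk2 (-B) (fun i => mult fstar fhat (Z i))
    simpa [sub_eq_add_neg] using this
  have hlb : -γ ≤ 2 * trimmedMean k (mult fstar fhat) Z := by
    have h7 : trimmedMean k (fun z => loss fstar z - loss fhat z) Z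
        ≤ trimmedMean k (fun z => 2 * mult fstar fhat z) Z := by
      rw [htm, htm]
      exact tmean_le_tmean fun i => hlossmult fhat (Z i)
    have h8 : trimmedMean k (fun z => 2 * mult fstar fhat z) Z
        = 2 * trimmedMean k (mult fstar fhat) Z := by
      rw [htm, htm]
      exact tmean_smul 2 (by norm_num) _
    have h9 : trimmedMean k (fun z => loss fstar z - loss fhat z) Z
        = - trimmedMean k (fun z => loss fhat z - loss fstar z) Z := by
      rw [htm, htm]
      have heq : (fun i => loss fstar (Z i) - loss fhat (Z i))
          = fun i => -((fun j => loss fhat (Z j) - loss fstar (Z j)) i) := by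
        funext i; ring
      rw [heq, tmean_neg]
    linarith
  have hfinal : -(2 * B) ≤ 2 * γ := by linarith
  have hrisk := hriskdiff fhat hfhatF
  have hA := hdist2_sq fhat hfhatF
  have hsq : (dist2 P fstar fhat) ^ 2 ≤ r ^ 2 :=
    pow_le_pow_left₀ (Real.sqrt_nonneg _) hpart1 2
  rw [← hBdef] at hrisk
  linarith [hrisk, hA, hsq, hfinal]


end Paper
end
end

section
/- Let x_{1:n} ∈ X^n, let g : X → ℝ, let M > 0, and let k be an integer with 1 ≤ k < n/2. If #{i ∈ [n] : |g(x_i)| > M} ≤ k, then T̂_{n,k}(g, x_{1:n}) = T̂_{n,k}(τ_M∘g, x_{1:n}). -/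
open MeasureTheory ProbabilityTheory Real Filter
open scoped BigOperators ENNReal NNReal Classical

noncomputable section

namespace Paper

variable {𝕏 : Type*} [MeasurableSpace 𝕏]

/-- the trimmed mean is unchanged by truncation when few values are large. -/
theorem trimmedMean_trunc_eq
    {𝕏 : Type*} (n : ℕ) (x : Fin n → 𝕏) (g : 𝕏 → ℝ) (M : ℝ) (hM : 0 < M)
    (k : ℕ) (hk1 : 1 ≤ k) (hk2 : 2 * k < n)
    (hcount : (Finset.univ.filter fun i : Fin n => M < |g (x i)|).card ≤ k) :
    trimmedMean k g x = trimmedMean k (fun z => trunc M (g z)) x := by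
  classical
  set f : Fin n → ℝ := fun j => g (x j) with hf
  set f' : Fin n → ℝ := fun j => trunc M (g (x j)) with hf'
  have htr : Monotone (trunc M) := fun a b h =>
    max_le_max le_rfl (min_le_min le_rfl h)
  have hmono : Monotone (f' ∘ Tuple.sort f) := by
    have : f' ∘ Tuple.sort f = trunc M ∘ (f ∘ Tuple.sort f) := rfl
    rw [this]
    exact htr.comp (Tuple.monotone_sort f)
  have heq : f' ∘ (Tuple.sort f) = f' ∘ Tuple.sort f' :=
    (Tuple.comp_sort_eq_comp_iff_monotone).mpr hmono
  -- card of big values is preserved under the sorting permutation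
  have hcard : (Finset.univ.filter fun j : Fin n => M < |f (Tuple.sort f j)|).card
      = (Finset.univ.filter fun i : Fin n => M < |g (x i)|).card := by
    apply Finset.card_bij (fun j _ => Tuple.sort f j)
    · intro j hj
      simp only [Finset.mem_filter, Finset.mem_univ, true_and] at hj ⊢
      exact hj
    · intro a ha b hb hab
      exact (Tuple.sort f).injective hab
    · intro b hb
      refine ⟨(Tuple.sort f).symm b, ?_, by simp⟩
      simp only [Finset.mem_filter, Finset.mem_univ, true_and] at hb ⊢
      simpa using hb
  have hcount' : (Finset.univ.filter fun j : Fin n => M < |f (Tuple.sort f j)|).card ≤ k := by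
    rw [hcard]; exact hcount
  -- middle values are bounded by M in absolute value
  have hmid : ∀ i : Fin n, k ≤ (i : ℕ) → (i : ℕ) < n - k → |f (Tuple.sort f i)| ≤ M := by
    intro i hik hikn
    by_contra habs
    push_neg at habs
    rcases lt_or_ge M (f (Tuple.sort f i)) with hbig | hsmall
    · -- everything above i is big
      have hsub : Finset.Ici i ⊆ Finset.univ.filter fun j : Fin n => M < |f (Tuple.sort f j)| := by
        intro j hj
        simp only [Finset.mem_Ici] at hj
        simp only [Finset.mem_filter, Finset.mem_univ, true_and]
        have := Tuple.monotone_sort f hj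
        have h2 : M < f (Tuple.sort f j) := lt_of_lt_of_le hbig this
        exact lt_of_lt_of_le h2 (le_abs_self _)
      have := Finset.card_le_card hsub
      rw [Fin.card_Ici] at this
      omega
    · have hneg : f (Tuple.sort f i) < -M := by
        rcases lt_abs.mp habs with h | h
        · linarith
        · linarith
      have hsub : Finset.Iic i ⊆ Finset.univ.filter fun j : Fin n => M < |f (Tuple.sort f j)| := by
        intro j hj
        simp only [Finset.mem_Iic] at hj
        simp only [Finset.mem_filter, Finset.mem_univ, true_and]
        have := Tuple.monotone_sort f hj
        have h2 : f (Tuple.sort f j) < -M := lt_of_le_of_lt this hneg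
        calc M < -(f (Tuple.sort f j)) := by linarith
          _ ≤ |f (Tuple.sort f j)| := neg_le_abs _
      have := Finset.card_le_card hsub
      rw [Fin.card_Iic] at this
      omega
  unfold trimmedMean
  congr 1
  apply Finset.sum_congr rfl
  intro i hi
  simp only [Finset.mem_filter, Finset.mem_univ, true_and] at hi
  have hb := hmid i hi.1 hi.2
  have hs : (fun z => trunc M (g z)) (x (Tuple.sort (fun j => (fun z => trunc M (g z)) (x j)) i))
      = f' (Tuple.sort f' i) := rfl
  have h3 : f' (Tuple.sort f' i) = f' (Tuple.sort f i) := (congrFun heq i).symm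
  rw [hs, h3]
  show g (x (Tuple.sort f i)) = trunc M (g (x (Tuple.sort f i)))
  have hb' := abs_le.mp hb
  unfold trunc
  rw [min_eq_right hb'.2, max_eq_right hb'.1]


end Paper
end
end
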